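/- (Eigenvalues at the splay state.) Let N ≥ 3 and α ∈ ℝ. Let A be the (N−1)×(N−1) real matrix with entries A_{k i} = cos(2π(i − k)/N − α) − cos(2πi/N − α) for k, i = 1,…,N−1 (the Jacobian of the phase-difference system at the uniform splay state φ_i = 2πi/N). Then the characteristic polynomial of A equals X^{N−3}·(X² − N cos α · X + N²/4). In particular, A has the eigenvalue 0 with multiplicity N−3 and the pair of eigenvalues (N/2)(cos α ± i sin α), so an Andronov–Hopf bifurcation of the splay state occurs at cos α = 0. -/

import Mathlib

open Real Polynomial

lemma geom_zero {z : ℂ} {N : ℕ} (h1 : z ≠ 1) (hN : z ^ N = 1) :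
    ∑ k ∈ Finset.range N, z ^ k = 0 := by
  rw [geom_sum_eq h1, hN, sub_self, zero_div]

lemma exp_sum_zero (N : ℕ) (hN : 3 ≤ N) (m : ℕ) (hm1 : 1 ≤ m) (hm2 : m < N) (γ : ℝ) :
    ∑ k ∈ Finset.range N, Complex.exp (((2 * π * m * k / N + γ : ℝ) : ℂ) * Complex.I) = 0 := by
  have hN0 : (N : ℂ) ≠ 0 := Nat.cast_ne_zero.mpr (by omega)
  set z : ℂ := Complex.exp (((2 * π * m / N : ℝ) : ℂ) * Complex.I) with hz
  have hz1 : z ≠ 1 := by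
    rw [hz]
    simp only [ne_eq, Complex.exp_eq_one_iff, not_exists]
    intro n hn
    have h3 : 2 * π * m / N = n * (2 * π) := by
      have := congrArg Complex.im hn
      simpa [Complex.mul_im, Complex.mul_re] using this
    have hNR : (0:ℝ) < N := by positivity
    have h4 : (m : ℝ) = n * N := by
      field_simp at h3
      nlinarith [Real.pi_pos, h3]
    have h5 : (m : ℤ) = n * N := by exact_mod_cast h4
    rcases le_or_gt n 0 with h | h
    · have : n * (N:ℤ) ≤ 0 := mul_nonpos_iff.mpr (Or.inr ⟨h, by positivity⟩)
      have : (1:ℤ) ≤ m := by exact_mod_cast hm1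
      linarith
    · have : (N:ℤ) ≤ n * N := le_mul_of_one_le_left (by positivity) h
      have : (m:ℤ) < N := by exact_mod_cast hm2
      linarith
  have hzN : z ^ N = 1 := by
    rw [hz, ← Complex.exp_nat_mul]
    rw [show (N:ℂ) * (((2*π*m/N : ℝ) : ℂ) * Complex.I) = (m:ℂ) * (2 * π * Complex.I) by
      push_cast; field_simp]
    simpa using Complex.exp_int_mul_two_pi_mul_I m
  calc ∑ k ∈ Finset.range N, Complex.exp (((2 * π * m * k / N + γ : ℝ) : ℂ) * Complex.I)
      = ∑ k ∈ Finset.range N, Complex.exp (((γ:ℝ):ℂ) * Complex.I) * z ^ k := by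
        refine Finset.sum_congr rfl fun k _ => ?_
        rw [hz, ← Complex.exp_nat_mul, ← Complex.exp_add]
        congr 1
        push_cast
        field_simp
        ring
    _ = 0 := by rw [← Finset.mul_sum, geom_zero hz1 hzN, mul_zero]

lemma sum_cos_tail (N : ℕ) (hN : 3 ≤ N) (m : ℕ) (hm1 : 1 ≤ m) (hm2 : m < N) (γ : ℝ) :
    ∑ k ∈ Finset.range (N - 1), Real.cos (2 * π * m * ((k:ℝ) + 1) / N + γ) = -Real.cos γ := by
  have h := exp_sum_zero N hN m hm1 hm2 γ
  have hc : ∑ k ∈ Finset.range N, Real.cos (2 * π * m * k / N + γ) = 0 := by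
    have h2 : ∀ k ∈ Finset.range N, Real.cos (2 * π * m * k / N + γ)
        = (Complex.exp (((2 * π * m * k / N + γ : ℝ) : ℂ) * Complex.I)).re :=
      fun k _ => (Complex.exp_ofReal_mul_I_re _).symm
    rw [Finset.sum_congr rfl h2, ← Complex.re_sum, h, Complex.zero_re]
  obtain ⟨M, rfl⟩ : ∃ M, N = M + 1 := ⟨N - 1, by omega⟩
  rw [Finset.sum_range_succ'] at hc
  simp only [Nat.cast_zero, mul_zero, zero_div, zero_add, Nat.add_sub_cancel] at hc ⊢
  have : ∀ k ∈ Finset.range M, Real.cos (2 * π * m * ((k:ℝ) + 1) / (M+1:ℕ) + γ)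
      = Real.cos (2 * π * m * ((k+1:ℕ):ℝ) / (M+1:ℕ) + γ) := by
    intro k _; push_cast; ring_nf
  rw [Finset.sum_congr rfl this]
  linarith [hc]

lemma sum_sin_tail (N : ℕ) (hN : 3 ≤ N) (m : ℕ) (hm1 : 1 ≤ m) (hm2 : m < N) (γ : ℝ) :
    ∑ k ∈ Finset.range (N - 1), Real.sin (2 * π * m * ((k:ℝ) + 1) / N + γ) = -Real.sin γ := by
  have h := exp_sum_zero N hN m hm1 hm2 γ
  have hc : ∑ k ∈ Finset.range N, Real.sin (2 * π * m * k / N + γ) = 0 := by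
    have h2 : ∀ k ∈ Finset.range N, Real.sin (2 * π * m * k / N + γ)
        = (Complex.exp (((2 * π * m * k / N + γ : ℝ) : ℂ) * Complex.I)).im :=
      fun k _ => (Complex.exp_ofReal_mul_I_im _).symm
    rw [Finset.sum_congr rfl h2, ← Complex.im_sum, h, Complex.zero_im]
  obtain ⟨M, rfl⟩ : ∃ M, N = M + 1 := ⟨N - 1, by omega⟩
  rw [Finset.sum_range_succ'] at hc
  simp only [Nat.cast_zero, mul_zero, zero_div, zero_add, Nat.add_sub_cancel] at hc ⊢
  have : ∀ k ∈ Finset.range M, Real.sin (2 * π * m * ((k:ℝ) + 1) / (M+1:ℕ) + γ)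
      = Real.sin (2 * π * m * ((k+1:ℕ):ℝ) / (M+1:ℕ) + γ) := by
    intro k _; push_cast; ring_nf
  rw [Finset.sum_congr rfl this]
  linarith [hc]

lemma T1c (N : ℕ) (hN : 3 ≤ N) (α : ℝ) :
    ∑ k ∈ Finset.range (N-1), Real.cos (2*π*((k:ℝ)+1)/N - α) = -Real.cos α := by
  have h := sum_cos_tail N hN 1 le_rfl (by omega) (-α)
  rw [Real.cos_neg] at h
  rw [← h]
  exact Finset.sum_congr rfl fun k _ => by congr 1; push_cast; ring

lemma T1s (N : ℕ) (hN : 3 ≤ N) (α : ℝ) :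
    ∑ k ∈ Finset.range (N-1), Real.sin (2*π*((k:ℝ)+1)/N - α) = Real.sin α := by
  have h := sum_sin_tail N hN 1 le_rfl (by omega) (-α)
  rw [Real.sin_neg, neg_neg] at h
  rw [← h]
  exact Finset.sum_congr rfl fun k _ => by congr 1; push_cast; ring

lemma T2c (N : ℕ) (hN : 3 ≤ N) (α : ℝ) :
    ∑ k ∈ Finset.range (N-1), Real.cos (2*(2*π*((k:ℝ)+1)/N) - α) = -Real.cos α := by
  have h := sum_cos_tail N hN 2 (by omega) (by omega) (-α)
  rw [Real.cos_neg] at h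
  rw [← h]
  exact Finset.sum_congr rfl fun k _ => by congr 1; push_cast; ring

lemma T2s (N : ℕ) (hN : 3 ≤ N) (α : ℝ) :
    ∑ k ∈ Finset.range (N-1), Real.sin (2*(2*π*((k:ℝ)+1)/N) - α) = Real.sin α := by
  have h := sum_sin_tail N hN 2 (by omega) (by omega) (-α)
  rw [Real.sin_neg, neg_neg] at h
  rw [← h]
  exact Finset.sum_congr rfl fun k _ => by congr 1; push_cast; ring

lemma entry00 (N : ℕ) (hN : 3 ≤ N) (α : ℝ) :
    ∑ k ∈ Finset.range (N-1),
      Real.cos (2*π*((k:ℝ)+1)/N - α) * (Real.cos (2*π*((k:ℝ)+1)/N) - 1)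
      = (N:ℝ)/2 * Real.cos α := by
  have key : ∀ θ : ℝ, Real.cos (θ-α) * (Real.cos θ - 1)
      = 1/2 * Real.cos (2*θ-α) - Real.cos (θ-α) + 1/2 * Real.cos α := by
    intro θ
    rw [Real.cos_sub (2*θ) α, Real.cos_sub θ α, Real.cos_two_mul, Real.sin_two_mul]; ring
  refine Eq.trans (Finset.sum_congr rfl fun k _ => key (2*π*((k:ℝ)+1)/N)) ?_
  rw [Finset.sum_add_distrib, Finset.sum_sub_distrib, ← Finset.mul_sum, T2c N hN α,
    T1c N hN α, Finset.sum_const, Finset.card_range, nsmul_eq_mul, Nat.cast_sub (by omega)]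
  push_cast; ring

lemma entry01 (N : ℕ) (hN : 3 ≤ N) (α : ℝ) :
    ∑ k ∈ Finset.range (N-1),
      Real.cos (2*π*((k:ℝ)+1)/N - α) * Real.sin (2*π*((k:ℝ)+1)/N)
      = (N:ℝ)/2 * Real.sin α := by
  have key : ∀ θ : ℝ, Real.cos (θ-α) * Real.sin θ
      = 1/2 * Real.sin (2*θ-α) + 1/2 * Real.sin α := by
    intro θ
    rw [Real.sin_sub (2*θ) α, Real.cos_sub θ α, Real.cos_two_mul, Real.sin_two_mul]
    linear_combination (Real.sin_sq_add_cos_sq θ) * Real.sin α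
  refine Eq.trans (Finset.sum_congr rfl fun k _ => key (2*π*((k:ℝ)+1)/N)) ?_
  rw [Finset.sum_add_distrib, ← Finset.mul_sum, T2s N hN α,
    Finset.sum_const, Finset.card_range, nsmul_eq_mul, Nat.cast_sub (by omega)]
  push_cast; ring

lemma entry10 (N : ℕ) (hN : 3 ≤ N) (α : ℝ) :
    ∑ k ∈ Finset.range (N-1),
      Real.sin (2*π*((k:ℝ)+1)/N - α) * (Real.cos (2*π*((k:ℝ)+1)/N) - 1)
      = -((N:ℝ)/2 * Real.sin α) := by
  have key : ∀ θ : ℝ, Real.sin (θ-α) * (Real.cos θ - 1)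
      = 1/2 * Real.sin (2*θ-α) - Real.sin (θ-α) - 1/2 * Real.sin α := by
    intro θ
    rw [Real.sin_sub (2*θ) α, Real.sin_sub θ α, Real.cos_two_mul, Real.sin_two_mul]; ring
  refine Eq.trans (Finset.sum_congr rfl fun k _ => key (2*π*((k:ℝ)+1)/N)) ?_
  rw [Finset.sum_sub_distrib, Finset.sum_sub_distrib, ← Finset.mul_sum, T2s N hN α,
    T1s N hN α, Finset.sum_const, Finset.card_range, nsmul_eq_mul, Nat.cast_sub (by omega)]
  push_cast; ring

lemma entry11 (N : ℕ) (hN : 3 ≤ N) (α : ℝ) :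
    ∑ k ∈ Finset.range (N-1),
      Real.sin (2*π*((k:ℝ)+1)/N - α) * Real.sin (2*π*((k:ℝ)+1)/N)
      = (N:ℝ)/2 * Real.cos α := by
  have key : ∀ θ : ℝ, Real.sin (θ-α) * Real.sin θ
      = 1/2 * Real.cos α - 1/2 * Real.cos (2*θ-α) := by
    intro θ
    rw [Real.cos_sub (2*θ) α, Real.sin_sub θ α, Real.cos_two_mul, Real.sin_two_mul]
    linear_combination (Real.sin_sq_add_cos_sq θ) * Real.cos α
  refine Eq.trans (Finset.sum_congr rfl fun k _ => key (2*π*((k:ℝ)+1)/N)) ?_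
  rw [Finset.sum_sub_distrib, Finset.sum_const, Finset.card_range, ← Finset.mul_sum,
    T2c N hN α, nsmul_eq_mul, Nat.cast_sub (by omega)]
  push_cast; ring

/-- Eigenvalues at the splay state: the Jacobian of the phase-difference
system at the uniform splay state `φ_i = 2πi/N` (entries
`A_{k i} = cos(2π(i-k)/N - α) - cos(2πi/N - α)`, indices `1,…,N-1`) has
characteristic polynomial `X^{N-3}·(X² - N cos α · X + N²/4)`; hence the
eigenvalue `0` with multiplicity `N-3` and the pair `(N/2)(cos α ± i sin α)`. -/
theorem stmt_15 (N : ℕ) (hN : 3 ≤ N) (α : ℝ)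
    (A : Matrix (Fin (N - 1)) (Fin (N - 1)) ℝ)
    (hA : ∀ k i : Fin (N - 1),
      A k i = Real.cos (2 * π * (((i : ℕ) + 1 : ℝ) - ((k : ℕ) + 1 : ℝ)) / N - α)
            - Real.cos (2 * π * ((i : ℕ) + 1 : ℝ) / N - α)) :
    A.charpoly
      = X ^ (N - 3) *
        (X ^ 2 - Polynomial.C ((N : ℝ) * Real.cos α) * X
          + Polynomial.C ((N : ℝ) ^ 2 / 4)) := by
  set U : Matrix (Fin (N-1)) (Fin 2) ℝ :=
    fun k => ![Real.cos (2*π*((k:ℕ)+1)/N) - 1, Real.sin (2*π*((k:ℕ)+1)/N)] with hU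
  set V : Matrix (Fin 2) (Fin (N-1)) ℝ :=
    Matrix.of ![fun i => Real.cos (2*π*((i:ℕ)+1)/N - α),
                fun i => Real.sin (2*π*((i:ℕ)+1)/N - α)] with hV
  have hAUV : A = U * V := by
    ext k i
    rw [hA, Matrix.mul_apply, Fin.sum_univ_two]
    simp only [hU, hV, Matrix.of_apply, Matrix.cons_val_zero, Matrix.cons_val_one,
      Matrix.head_cons]
    rw [show 2*π*(((i:ℕ)+1:ℝ) - ((k:ℕ)+1:ℝ))/N - α
        = (2*π*((i:ℕ)+1)/N - α) - 2*π*((k:ℕ)+1)/N by ring, Real.cos_sub]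
    ring
  have hVU : V * U = Matrix.of ![![(N:ℝ)/2 * Real.cos α, (N:ℝ)/2 * Real.sin α],
      ![-((N:ℝ)/2 * Real.sin α), (N:ℝ)/2 * Real.cos α]] := by
    ext a b
    rw [Matrix.mul_apply]
    fin_cases a <;> fin_cases b <;>
      simp only [hU, hV, Matrix.of_apply, Matrix.cons_val_zero, Matrix.cons_val_one,
        Matrix.head_cons]
    · exact (Fin.sum_univ_eq_sum_range
        (fun k => Real.cos (2*π*((k:ℝ)+1)/N - α) * (Real.cos (2*π*((k:ℝ)+1)/N) - 1))
        (N-1)).trans (entry00 N hN α)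
    · exact (Fin.sum_univ_eq_sum_range
        (fun k => Real.cos (2*π*((k:ℝ)+1)/N - α) * Real.sin (2*π*((k:ℝ)+1)/N))
        (N-1)).trans (entry01 N hN α)
    · exact (Fin.sum_univ_eq_sum_range
        (fun k => Real.sin (2*π*((k:ℝ)+1)/N - α) * (Real.cos (2*π*((k:ℝ)+1)/N) - 1))
        (N-1)).trans (entry10 N hN α)
    · exact (Fin.sum_univ_eq_sum_range
        (fun k => Real.sin (2*π*((k:ℝ)+1)/N - α) * Real.sin (2*π*((k:ℝ)+1)/N))
        (N-1)).trans (entry11 N hN α)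
  apply Polynomial.eq_of_infinite_eval_eq
  have hinf : ({x : ℝ | x ≠ 0}).Infinite := by
    have h := (Set.finite_singleton (0:ℝ)).infinite_compl
    convert h using 1
    ext y; simp
  refine Set.Infinite.mono (fun x hx => ?_) hinf
  simp only [Set.mem_setOf_eq] at hx ⊢
  have hev : Polynomial.eval x A.charpoly
      = Matrix.det (x • (1 : Matrix (Fin (N-1)) (Fin (N-1)) ℝ) - A) := by
    rw [Matrix.charpoly, ← Polynomial.coe_evalRingHom, RingHom.map_det]
    congr 1
    ext i j
    by_cases h : i = j
    · subst h
      simp [Matrix.charmatrix_apply_eq, Matrix.map_apply, Matrix.sub_apply,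
        Matrix.smul_apply, Matrix.one_apply_eq, smul_eq_mul]
    · simp [Matrix.charmatrix_apply_ne _ _ _ h, Matrix.map_apply, Matrix.sub_apply,
        Matrix.smul_apply, Matrix.one_apply_ne h, smul_eq_mul]
  have hsplit : x • (1 : Matrix (Fin (N-1)) (Fin (N-1)) ℝ) - A
      = x • ((1 : Matrix (Fin (N-1)) (Fin (N-1)) ℝ) + ((-x⁻¹) • U) * V) := by
    rw [hAUV, Matrix.smul_mul, smul_add, smul_smul, mul_neg, mul_inv_cancel₀ hx]
    simp [neg_smul, sub_eq_add_neg]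
  have hdet2 : Matrix.det ((1 : Matrix (Fin 2) (Fin 2) ℝ) + V * ((-x⁻¹) • U))
      = 1 - x⁻¹ * ((N:ℝ) * Real.cos α) + x⁻¹^2 * ((N:ℝ)^2/4) := by
    rw [Matrix.mul_smul, hVU, Matrix.det_fin_two]
    norm_num [Matrix.add_apply, Matrix.smul_apply, Matrix.of_apply, Matrix.one_apply]
    linear_combination (x⁻¹^2 * (N:ℝ)^2/4) * (Real.sin_sq_add_cos_sq α)
  rw [hev, hsplit, Matrix.det_smul, Matrix.det_one_add_mul_comm, hdet2, Fintype.card_fin]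
  have hpow : x ^ (N-1) = x^(N-3) * x^2 := by rw [← pow_add]; congr 1; omega
  simp only [Polynomial.eval_mul, Polynomial.eval_pow, Polynomial.eval_add,
    Polynomial.eval_sub, Polynomial.eval_C, Polynomial.eval_X]
  rw [hpow]
  field_simp
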